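/- arXiv:2208.08522 — 4 statements merged into one kernel-verified Lean document; each statement's English description precedes it below -/
import Mathlib

section
/- Let G be a directed Eulerian graph without parallel edges or self-loops that contains a node v with d(v) ≥ 3 or a node v with d(v) = 2 that is not a cut node of U(G). Then G has at least two distinct Eulerian circuits (not cyclic rotations of each other). -/
/-- The underlying undirected simple graph of a directed graph `E` (no self-loops). -/
def underlyingUG {V : Type*} (E : V → V → Prop) : SimpleGraph V where
  Adj a b := a ≠ b ∧ (E a b ∨ E b a)
  symm := ⟨fun a b h => ⟨h.1.symm, h.2.symm⟩⟩
  loopless := ⟨fun a h => h.1 rfl⟩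

/-- Out-degree of `v`: number of out-neighbors. -/
noncomputable def outdeg {V : Type*} (E : V → V → Prop) (v : V) : ℕ := Set.ncard {w | E v w}

/-- In-degree of `v`: number of in-neighbors. -/
noncomputable def indeg {V : Type*} (E : V → V → Prop) (v : V) : ℕ := Set.ncard {u | E u v}

/-- The cyclic sequence of consecutive pairs of a circuit given as a vertex list. -/
def cyclicPairs {V : Type*} (c : List V) : List (V × V) := c.zip (c.rotate 1)

/-- `c` is an Eulerian circuit: a nonempty closed walk using every edge exactly once. -/
def IsEulerianCircuit {V : Type*} (E : V → V → Prop) (c : List V) : Prop :=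
  c ≠ [] ∧ (cyclicPairs c).Nodup ∧ ∀ p : V × V, p ∈ cyclicPairs c ↔ E p.1 p.2

/-- The walk `q` appears (cyclically, as consecutive edges) in the circuit `c`. -/
def Appears {V : Type*} (q c : List V) : Prop :=
  ∃ k, (q.zip q.tail) <:+: cyclicPairs (c.rotate k)

/-- `v` is a cut node of the connected undirected graph `H`. -/
def IsCutNode {V : Type*} (H : SimpleGraph V) (v : V) : Prop :=
  ¬ (H.induce {u | u ≠ v}).Connected

/-- The underlying undirected graph with node `v` (and incident edges) removed. -/
def delNode {V : Type*} (E : V → V → Prop) (v : V) := (underlyingUG E).induce {u | u ≠ v}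


section Aux
open List


variable {α : Type*}

/-- Pairs of consecutive elements of an (open) walk. -/
def wpr (l : List α) : List (α × α) := l.zip l.tail

lemma wpr_cons_cons (a b : α) (l : List α) : wpr (a :: b :: l) = (a, b) :: wpr (b :: l) := rfl

lemma wpr_singleton (a : α) : wpr [a] = [] := rfl

lemma wpr_split (A : List α) (b : α) (B : List α) :
    wpr (A ++ b :: B) = wpr (A ++ [b]) ++ wpr (b :: B) := by
  induction A with
  | nil => simp [wpr_singleton]
  | cons a A ih =>
    cases A with
    | nil => simp [wpr_cons_cons, wpr_singleton]
    | cons a' A' =>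
      rw [cons_append, cons_append, cons_append, cons_append] at *
      rw [wpr_cons_cons, wpr_cons_cons, ih, cons_append]

lemma zip_append_left (l r m : List α) (h : m.length ≤ l.length) :
    (l ++ r).zip m = l.zip m := by
  induction l generalizing m with
  | nil => cases m <;> simp_all
  | cons a l ih =>
    cases m with
    | nil => simp
    | cons b m => simp at h; simp [zip_cons_cons, ih m h]

lemma cp_eq_wpr (l : List α) (h : l ≠ []) : cyclicPairs l = wpr (l ++ [l.head h]) := by
  cases l with
  | nil => exact absurd rfl h
  | cons a t =>
    show (a::t).zip ((a::t).rotate 1) = wpr ((a::t) ++ [a])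
    rw [rotate_cons_succ, rotate_zero]
    show _ = ((a :: t) ++ [a]).zip (((a :: t) ++ [a]).tail)
    rw [cons_append, tail_cons, ← cons_append, zip_append_left]
    simp


lemma cp_length (l : List α) : (cyclicPairs l).length = l.length := by
  simp [cyclicPairs]

lemma cp_rotate (l : List α) (n : ℕ) :
    cyclicPairs (l.rotate n) = (cyclicPairs l).rotate n := by
  apply List.ext_getElem
  · simp [cp_length, cyclicPairs]
  · intro i h1 h2
    rw [getElem_rotate]
    simp only [cyclicPairs]
    rw [getElem_zip, getElem_zip]
    rw [getElem_rotate, getElem_rotate, getElem_rotate, getElem_rotate]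
    simp only [length_rotate, length_zip, min_self]
    congr 2
    rw [Nat.mod_add_mod, Nat.mod_add_mod]
    congr 1
    omega

lemma cp_succ_unique {l : List α} (h : l.Nodup) {e f g : α}
    (h1 : (e, f) ∈ cyclicPairs l) (h2 : (e, g) ∈ cyclicPairs l) : f = g := by
  rw [mem_iff_getElem] at h1 h2
  obtain ⟨i, hi, hif⟩ := h1
  obtain ⟨j, hj, hjg⟩ := h2
  simp only [cyclicPairs, getElem_zip, Prod.mk.injEq] at hif hjg
  have hi' : i < l.length := by simpa [cp_length] using hi
  have hj' : j < l.length := by simpa [cp_length] using hj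
  have hij : i = j := by
    have := hif.1.trans hjg.1.symm
    exact (List.Nodup.getElem_inj_iff h).mp this
  subst hij
  exact hif.2.symm.trans hjg.2

lemma getLast_mem_wpr (Q : List α) (h : Q ≠ []) (x : α) :
    (Q.getLast h, x) ∈ wpr (Q ++ [x]) := by
  induction Q with
  | nil => exact absurd rfl h
  | cons a Q ih =>
    cases Q with
    | nil => simp [wpr_cons_cons]
    | cons q Q' =>
      rw [cons_append, cons_append, wpr_cons_cons, ← cons_append]
      refine mem_cons.mpr (Or.inr ?_)
      have := ih (by simp)
      simpa [List.getLast_cons] using this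

lemma wpr_mem_append {p : α × α} {l : List α} (r : List α) (h : p ∈ wpr l) :
    p ∈ wpr (l ++ r) := by
  induction l with
  | nil => simp [wpr] at h
  | cons a l ih =>
    cases l with
    | nil => simp [wpr] at h
    | cons b l' =>
      rw [wpr_cons_cons] at h
      rw [cons_append, cons_append, wpr_cons_cons, ← cons_append]
      rcases mem_cons.mp h with h | h
      · exact mem_cons.mpr (Or.inl h)
      · exact mem_cons.mpr (Or.inr (ih h))

lemma cp_mem_adj (Q : List α) (hQ : Q ≠ []) (b : α) (M : List α) :
    (Q.getLast hQ, b) ∈ cyclicPairs (Q ++ b :: M) := by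
  have hne : Q ++ b :: M ≠ [] := by simp
  rw [cp_eq_wpr _ hne, append_assoc, cons_append]
  rw [wpr_split Q b (M ++ [(Q ++ b :: M).head hne])]
  exact mem_append_left _ (getLast_mem_wpr Q hQ b)

lemma core_nonrot (Q1 Q2 Q3 Q4 : List α) (h1 : Q1 ≠ []) (h2 : Q2 ≠ []) (h4 : Q4 ≠ [])
    (hnd : (Q1 ++ Q2 ++ Q3 ++ Q4).Nodup) (k : ℕ)
    (heq : Q1 ++ Q4 ++ Q3 ++ Q2 = (Q1 ++ Q2 ++ Q3 ++ Q4).rotate k) : False := by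
  obtain ⟨f, Q2', rfl⟩ := exists_cons_of_ne_nil h2
  obtain ⟨g, Q4', rfl⟩ := exists_cons_of_ne_nil h4
  set e := Q1.getLast h1 with he
  have hfg : f ≠ g := by
    have hsub : (f :: Q2') ++ (g :: Q4') <+ Q1 ++ (f :: Q2') ++ Q3 ++ (g :: Q4') := by
      have s1 : (f :: Q2') ++ (g :: Q4') <+ (f :: Q2') ++ (Q3 ++ (g :: Q4')) :=
        ((sublist_append_right Q3 _).append_left _)
      calc (f :: Q2') ++ (g :: Q4') <+ (f :: Q2') ++ Q3 ++ (g :: Q4') := by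
            simpa [append_assoc] using s1
        _ <+ Q1 ++ (f :: Q2') ++ Q3 ++ (g :: Q4') := by
            simp only [append_assoc]
            exact sublist_append_right Q1 _
    have hnd2 := hnd.sublist hsub
    have hdisj := disjoint_of_nodup_append hnd2
    intro hE
    exact hdisj (mem_cons_self : f ∈ f :: Q2') (by rw [hE]; exact (mem_cons_self : g ∈ g :: Q4'))
  have m1 : (e, f) ∈ cyclicPairs (Q1 ++ (f :: Q2') ++ Q3 ++ (g :: Q4')) := by
    have := cp_mem_adj Q1 h1 f (Q2' ++ Q3 ++ (g :: Q4'))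
    simpa [append_assoc] using this
  have m2 : (e, g) ∈ cyclicPairs (Q1 ++ (g :: Q4') ++ Q3 ++ (f :: Q2')) := by
    have := cp_mem_adj Q1 h1 g (Q4' ++ Q3 ++ (f :: Q2'))
    simpa [append_assoc] using this
  rw [heq, cp_rotate, mem_rotate] at m2
  exact hfg (cp_succ_unique hnd m1 m2)

lemma wpr_split' (x : α) (A : List α) (b : α) (B : List α) :
    wpr (x :: (A ++ b :: B)) = wpr (x :: (A ++ [b])) ++ wpr (b :: B) := by
  have := wpr_split (x :: A) b B
  simpa [cons_append] using this

lemma cp_four (x y : α) (A B C D : List α) :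
    cyclicPairs (x :: A ++ y :: B ++ x :: C ++ y :: D) =
      wpr (x :: A ++ [y]) ++ wpr (y :: B ++ [x]) ++ wpr (x :: C ++ [y]) ++ wpr (y :: D ++ [x]) := by
  have hne : x :: A ++ y :: B ++ x :: C ++ y :: D ≠ [] := by simp
  rw [cp_eq_wpr _ hne]
  have hh : (x :: A ++ y :: B ++ x :: C ++ y :: D).head hne = x := by
    simp [cons_append]
  rw [hh]
  simp only [cons_append, append_assoc]
  rw [wpr_split' x A y, wpr_split' y B x, wpr_split' x C y, wpr_split' y D x]

lemma cp_three (x : α) (A B C : List α) :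
    cyclicPairs (x :: A ++ x :: B ++ x :: C) =
      wpr (x :: A ++ [x]) ++ wpr (x :: B ++ [x]) ++ wpr (x :: C ++ [x]) := by
  have hne : x :: A ++ x :: B ++ x :: C ≠ [] := by simp
  rw [cp_eq_wpr _ hne]
  have hh : (x :: A ++ x :: B ++ x :: C).head hne = x := by
    simp [cons_append]
  rw [hh]
  simp only [cons_append, append_assoc]
  rw [wpr_split' x A x, wpr_split' x B x, wpr_split' x C x]

variable {V : Type*} {E : V → V → Prop}

lemma eulerian_rotate {c : List V} (h : IsEulerianCircuit E c) (k : ℕ) :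
    IsEulerianCircuit E (c.rotate k) := by
  obtain ⟨h1, h2, h3⟩ := h
  refine ⟨by simpa [rotate_eq_nil_iff] using h1, ?_, ?_⟩
  · rw [cp_rotate]; exact nodup_rotate.mpr h2
  · intro p; rw [cp_rotate, mem_rotate]; exact h3 p

lemma eulerian_of_perm {c c' : List V} (h : IsEulerianCircuit E c)
    (hp : cyclicPairs c' ~ cyclicPairs c) (hne : c' ≠ []) :
    IsEulerianCircuit E c' := by
  obtain ⟨h1, h2, h3⟩ := h
  exact ⟨hne, hp.nodup_iff.mpr h2, fun p => (hp.mem_iff).trans (h3 p)⟩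

lemma count_one_split {v : V} {t : List V} [DecidableEq V] (h : t.count v = 1) :
    ∃ A B, t = A ++ v :: B ∧ v ∉ A ∧ v ∉ B := by
  induction t with
  | nil => simp at h
  | cons a t ih =>
    by_cases hav : a = v
    · subst hav
      rw [count_cons_self] at h
      have : t.count a = 0 := by omega
      exact ⟨[], t, by simp, by simp, count_eq_zero.mp this⟩
    · simp only [count_cons, beq_iff_eq, hav, if_false] at h
      have h' : t.count v = 1 := by omega
      obtain ⟨A, B, rfl, hA, hB⟩ := ih h'
      exact ⟨a :: A, B, by simp, by simp [hA]; exact fun hh => hav hh.symm, hB⟩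

lemma count_two_split {v : V} {t : List V} [DecidableEq V] (h : 2 ≤ t.count v) :
    ∃ A B C, t = A ++ v :: B ++ v :: C := by
  induction t with
  | nil => simp at h
  | cons a t ih =>
    by_cases hav : a = v
    · subst hav
      rw [count_cons_self] at h
      have h1 : 1 ≤ t.count a := by omega
      have hv : a ∈ t := count_pos_iff.mp (by omega)
      obtain ⟨B, C, rfl⟩ := append_of_mem hv
      exact ⟨[], B, C, by simp⟩
    · simp only [count_cons, beq_iff_eq, hav, if_false] at h
      have h' : 2 ≤ t.count v := by omega
      obtain ⟨A, B, C, rfl⟩ := ih h'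
      exact ⟨a :: A, B, C, by simp⟩

lemma count_eq_outdeg [Fintype V] [DecidableEq V] {c : List V}
    (h : IsEulerianCircuit E c) (v : V) : c.count v = outdeg E v := by
  obtain ⟨h1, h2, h3⟩ := h
  have hmap : (cyclicPairs c).map Prod.fst = c :=
    map_fst_zip (by simp)
  set F := (cyclicPairs c).filter (fun p => p.1 == v) with hF
  have hFnd : F.Nodup := h2.filter _
  have hsndnd : (F.map Prod.snd).Nodup := by
    refine hFnd.map_on ?_
    intro p hp q hq hpq
    have hp' := of_mem_filter hp
    have hq' := of_mem_filter hq
    simp only [beq_iff_eq] at hp' hq'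
    exact Prod.ext (hp'.trans hq'.symm) hpq
  have hset : {w | E v w} = ↑(F.map Prod.snd).toFinset := by
    ext w
    simp only [Set.mem_setOf_eq, Finset.mem_coe, List.mem_toFinset]
    constructor
    · intro hw
      have : (v, w) ∈ cyclicPairs c := (h3 (v, w)).mpr hw
      exact mem_map.mpr ⟨(v, w), mem_filter.mpr ⟨this, by simp⟩, rfl⟩
    · intro hw
      obtain ⟨p, hp, hpw⟩ := mem_map.mp hw
      have h4 := of_mem_filter hp
      have h5 := mem_of_mem_filter hp
      simp only [beq_iff_eq] at h4
      have : p = (v, w) := Prod.ext h4 hpw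
      subst this
      exact (h3 (v, w)).mp h5
  have hod : outdeg E v = F.length := by
    rw [outdeg, hset, Set.ncard_coe_finset, List.toFinset_card_of_nodup hsndnd,
      length_map]
  rw [hod, ← hmap, hF]
  rw [← countP_eq_length_filter, List.count, List.countP_map]
  rfl

lemma wpr_cons_ne_nil (a : α) {M : List α} (h : M ≠ []) : wpr (a :: M) ≠ [] := by
  obtain ⟨b, M', rfl⟩ := exists_cons_of_ne_nil h
  rw [wpr_cons_cons]
  simp

lemma case1_lemma [DecidableEq V] {c0 : List V} (v : V) (A B D : List V)
    (hc0 : IsEulerianCircuit E c0) (hdec : c0 = v :: A ++ v :: B ++ v :: D) :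
    ∃ c', IsEulerianCircuit E c' ∧ ∀ k : ℕ, c' ≠ c0.rotate k := by
  set Q1 := wpr (v :: A ++ [v]) with hQ1
  set Q2 := wpr (v :: B ++ [v]) with hQ2
  set Q3 := wpr (v :: D ++ [v]) with hQ3
  have hcp0 : cyclicPairs c0 = Q1 ++ Q2 ++ Q3 := by rw [hdec]; exact cp_three v A B D
  refine ⟨v :: A ++ v :: D ++ v :: B, ?_, ?_⟩
  · apply eulerian_of_perm hc0 _ (by simp)
    rw [cp_three v A D B, hcp0, ← hQ1, ← hQ2, ← hQ3]
    calc Q1 ++ Q3 ++ Q2 ~ Q1 ++ (Q2 ++ Q3) := by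
          rw [append_assoc]
          exact Perm.append_left Q1 perm_append_comm
      _ = Q1 ++ Q2 ++ Q3 := (append_assoc ..).symm
  · intro k heq
    have hpairs := congrArg cyclicPairs heq
    rw [cp_three v A D B, ← hQ1, ← hQ2, ← hQ3, cp_rotate, hcp0] at hpairs
    refine core_nonrot Q1 Q2 [] Q3 ?_ ?_ ?_ ?_ k ?_
    · exact wpr_cons_ne_nil v (by simp)
    · exact wpr_cons_ne_nil v (by simp)
    · exact wpr_cons_ne_nil v (by simp)
    · have := hc0.2.1
      rw [hcp0] at this
      simpa using this
    · simpa using hpairs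

lemma case2_lemma [DecidableEq V] {c0 : List V} (v u : V) (A1 A2 B1 B2 : List V)
    (hc0 : IsEulerianCircuit E c0)
    (hdec : c0 = v :: A1 ++ u :: A2 ++ v :: B1 ++ u :: B2) :
    ∃ c', IsEulerianCircuit E c' ∧ ∀ k : ℕ, c' ≠ c0.rotate k := by
  set Q1 := wpr (v :: A1 ++ [u]) with hQ1
  set Q2 := wpr (u :: A2 ++ [v]) with hQ2
  set Q3 := wpr (v :: B1 ++ [u]) with hQ3
  set Q4 := wpr (u :: B2 ++ [v]) with hQ4
  have hcp0 : cyclicPairs c0 = Q1 ++ Q2 ++ Q3 ++ Q4 := by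
    rw [hdec]; exact cp_four v u A1 A2 B1 B2
  have hperm : Q1 ++ Q4 ++ Q3 ++ Q2 ~ Q1 ++ Q2 ++ Q3 ++ Q4 := by
    rw [append_assoc, append_assoc, append_assoc, append_assoc]
    refine Perm.append_left Q1 ?_
    calc Q4 ++ (Q3 ++ Q2) ~ Q3 ++ Q2 ++ Q4 := perm_append_comm
      _ ~ Q2 ++ Q3 ++ Q4 := Perm.append_right Q4 perm_append_comm
      _ ~ Q2 ++ (Q3 ++ Q4) := by rw [append_assoc]
  refine ⟨v :: A1 ++ u :: B2 ++ v :: B1 ++ u :: A2, ?_, ?_⟩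
  · apply eulerian_of_perm hc0 _ (by simp)
    rw [cp_four v u A1 B2 B1 A2, hcp0, ← hQ1, ← hQ2, ← hQ3, ← hQ4]
    exact hperm
  · intro k heq
    have hpairs := congrArg cyclicPairs heq
    rw [cp_four v u A1 B2 B1 A2, ← hQ1, ← hQ2, ← hQ3, ← hQ4, cp_rotate, hcp0] at hpairs
    refine core_nonrot Q1 Q2 Q3 Q4 ?_ ?_ ?_ ?_ k hpairs
    · exact wpr_cons_ne_nil v (by simp)
    · exact wpr_cons_ne_nil u (by simp)
    · exact wpr_cons_ne_nil u (by simp)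
    · have := hc0.2.1
      rw [hcp0] at this
      exact this

lemma cp_two {α : Type*} (x : α) (A B : List α) :
    cyclicPairs (x :: A ++ x :: B) = wpr (x :: A ++ [x]) ++ wpr (x :: B ++ [x]) := by
  have hne : x :: A ++ x :: B ≠ [] := by simp
  rw [cp_eq_wpr _ hne]
  have hh : (x :: A ++ x :: B).head hne = x := by simp [cons_append]
  rw [hh]
  simp only [cons_append, append_assoc]
  rw [wpr_split' x A x, wpr_split' x B x]

lemma cp_last_head {α : Type*} (c : List α) (h : c ≠ []) :
    (c.getLast h, c.head h) ∈ cyclicPairs c := by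
  rw [cp_eq_wpr _ h]
  exact getLast_mem_wpr c h (c.head h)

lemma underlyingUG_adj {V : Type*} {E : V → V → Prop} {a b : V} :
    (underlyingUG E).Adj a b ↔ a ≠ b ∧ (E a b ∨ E b a) := Iff.rfl


end Aux

open List in
/-- If some node has degree at least `3`, or degree `2` and is not a cut node of `U(G)`,
then `G` has at least two Eulerian circuits that are not rotations of each other. -/
theorem not_A_implies_two_circuits {V : Type*} [Fintype V] (E : V → V → Prop)
    (hloop : ∀ x : V, ¬ E x x) (hconn : (underlyingUG E).Connected)
    (heul : ∃ c : List V, IsEulerianCircuit E c)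
    (h : ∃ v : V, 3 ≤ outdeg E v ∨
        (outdeg E v = 2 ∧ ¬ IsCutNode (underlyingUG E) v)) :
    ∃ c c' : List V, IsEulerianCircuit E c ∧ IsEulerianCircuit E c' ∧
      ∀ k : ℕ, c' ≠ c.rotate k := by
  classical
  obtain ⟨c, hc⟩ := heul
  obtain ⟨v, hv⟩ := h
  have hcount : c.count v = outdeg E v := count_eq_outdeg hc v
  have hvpos : 0 < c.count v := by rcases hv with h3 | ⟨h2, _⟩ <;> omega
  have hvmem : v ∈ c := count_pos_iff.mp hvpos
  obtain ⟨s, t, rfl⟩ := append_of_mem hvmem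
  set c0 := v :: (t ++ s) with hc0def
  have hc0ne : c0 ≠ [] := by simp [hc0def]
  have hrot : (s ++ v :: t).rotate s.length = c0 := by
    rw [rotate_eq_drop_append_take (by simp)]
    rw [drop_left, take_left]
    simp [hc0def]
  have hc0 : IsEulerianCircuit E c0 := hrot ▸ eulerian_rotate hc s.length
  have hcnt0 : c0.count v = outdeg E v := by
    rw [← hcount, ← hrot]
    exact ((s ++ v :: t).rotate_perm s.length).count_eq v
  have hcnt0' : c0.count v = (t ++ s).count v + 1 := by
    rw [hc0def, count_cons_self]
  rcases hv with hdeg3 | ⟨hdeg2, hncut⟩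
  · have h2 : 2 ≤ (t ++ s).count v := by omega
    obtain ⟨A, B, D, hsplit⟩ := count_two_split h2
    have hdec : c0 = v :: A ++ v :: B ++ v :: D := by rw [hc0def, hsplit]; simp
    obtain ⟨c', hc', hnr⟩ := case1_lemma v A B D hc0 hdec
    exact ⟨c0, c', hc0, hc', hnr⟩
  · have h1 : (t ++ s).count v = 1 := by omega
    obtain ⟨A, B, hsplit, hvA, hvB⟩ := count_one_split h1
    have hdec : c0 = v :: A ++ v :: B := by rw [hc0def, hsplit]; simp
    have hAne : A ≠ [] := by
      rintro rfl
      have hmm : (v, v) ∈ cyclicPairs c0 := by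
        rw [hdec]
        have := cp_mem_adj [v] (by simp) v B
        simpa using this
      exact hloop v ((hc0.2.2 (v, v)).mp hmm)
    have hBne : B ≠ [] := by
      rintro rfl
      have hmm : (v, v) ∈ cyclicPairs c0 := by
        rw [hdec]
        have := cp_last_head (v :: A ++ [v]) (by simp)
        simpa using this
      exact hloop v ((hc0.2.2 (v, v)).mp hmm)
    have hconn' : ((underlyingUG E).induce {u | u ≠ v}).Connected := not_not.mp hncut
    have hcp2 : cyclicPairs c0 = wpr (v :: A ++ [v]) ++ wpr (v :: B ++ [v]) := by
      rw [hdec]; exact cp_two v A B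
    have hAB : ∀ x y : V, (x, y) ∈ cyclicPairs c0 → x ≠ v → y ≠ v →
        (x ∈ A ∧ y ∈ A) ∨ (x ∈ B ∧ y ∈ B) := by
      intro x y hm hx hy
      rw [hcp2] at hm
      rcases mem_append.mp hm with hm | hm
      · left
        rw [show v :: A ++ [v] = v :: (A ++ [v]) from by simp] at hm
        obtain ⟨hx1, hy1⟩ := of_mem_zip hm
        rw [tail_cons] at hy1
        constructor
        · rcases mem_cons.mp hx1 with h' | h'
          · exact absurd h' hx
          · rcases mem_append.mp h' with h' | h'
            · exact h'
            · simp at h'; exact absurd h' hx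
        · rcases mem_append.mp hy1 with h' | h'
          · exact h'
          · simp at h'; exact absurd h' hy
      · right
        rw [show v :: B ++ [v] = v :: (B ++ [v]) from by simp] at hm
        obtain ⟨hx1, hy1⟩ := of_mem_zip hm
        rw [tail_cons] at hy1
        constructor
        · rcases mem_cons.mp hx1 with h' | h'
          · exact absurd h' hx
          · rcases mem_append.mp h' with h' | h'
            · exact h'
            · simp at h'; exact absurd h' hx
        · rcases mem_append.mp hy1 with h' | h'
          · exact h'
          · simp at h'; exact absurd h' hy
    obtain ⟨w0, hw0A, hw0B⟩ : ∃ w0, w0 ∈ A ∧ w0 ∈ B := by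
      by_contra hex
      push_neg at hex
      have key : ∀ (x y : {u : V // u ≠ v})
          (w : ((underlyingUG E).induce {u | u ≠ v}).Walk x y), x.1 ∈ A → y.1 ∈ A := by
        intro x y w
        induction w with
        | nil => exact id
        | @cons x' z' y' hadj p ih =>
          intro hx
          apply ih
          have hadj' : (underlyingUG E).Adj x'.1 z'.1 := hadj
          rw [underlyingUG_adj] at hadj'
          have hxv : x'.1 ≠ v := x'.2
          have hzv : z'.1 ≠ v := z'.2
          have hcase : (x'.1 ∈ A ∧ z'.1 ∈ A) ∨ (x'.1 ∈ B ∧ z'.1 ∈ B) := by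
            rcases hadj'.2 with hE | hE
            · exact hAB _ _ ((hc0.2.2 _).mpr hE) hxv hzv
            · rcases hAB _ _ ((hc0.2.2 _).mpr hE) hzv hxv with ⟨h1', h2'⟩ | ⟨h1', h2'⟩
              · exact Or.inl ⟨h2', h1'⟩
              · exact Or.inr ⟨h2', h1'⟩
          rcases hcase with ⟨_, hz⟩ | ⟨hxB, _⟩
          · exact hz
          · exact absurd hxB (hex _ hx)
      have haA : A.head hAne ∈ A := head_mem hAne
      have hbB : B.head hBne ∈ B := head_mem hBne
      have haS : A.head hAne ≠ v := fun h' => hvA (h' ▸ haA)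
      have hbS : B.head hBne ≠ v := fun h' => hvB (h' ▸ hbB)
      obtain ⟨w⟩ := hconn'.preconnected ⟨_, haS⟩ ⟨_, hbS⟩
      exact hex _ (key _ _ w haA) hbB
    obtain ⟨A1, A2, rfl⟩ := append_of_mem hw0A
    obtain ⟨B1, B2, rfl⟩ := append_of_mem hw0B
    have hdec4 : c0 = v :: A1 ++ w0 :: A2 ++ v :: B1 ++ w0 :: B2 := by
      rw [hdec]; simp
    obtain ⟨c', hc', hnr⟩ := case2_lemma v w0 A1 A2 B1 B2 hc0 hdec4
    exact ⟨c0, c', hc0, hc', hnr⟩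
end

section
/- Let G = (V,E) be a directed Eulerian graph without parallel edges or self-loops. Any two distinct maximal safe walks for Eulerian circuits of G are edge-disjoint, and the sum of the lengths (number of edges) of all maximal safe walks of G equals |E|. -/
/-- A safe walk: a walk with at least one edge appearing in every Eulerian circuit. -/
def IsSafe {V : Type*} (E : V → V → Prop) (W : List V) : Prop :=
  2 ≤ W.length ∧ ∀ c, IsEulerianCircuit E c → Appears W c

/-- `q` is a subwalk of the (linear) walk `w`: its edge sequence is an infix. -/
def SubwalkOf {V : Type*} (q w : List V) : Prop :=
  (q.zip q.tail) <:+: (w.zip w.tail)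

/-- A maximal safe walk: a safe walk not a proper subwalk of another safe walk. -/
def IsMaxSafe {V : Type*} (E : V → V → Prop) (W : List V) : Prop :=
  IsSafe E W ∧ ∀ W', IsSafe E W' → SubwalkOf W W' → W.length = W'.length


section Aux
open List

variable {V : Type*}

lemma MSW.get_congr (l : List V) {i j : ℕ} (h : i = j) (hi : i < l.length) :
    l.get ⟨i, hi⟩ = l.get ⟨j, h ▸ hi⟩ := by subst h; rfl

lemma MSW.length_cyclicPairs (c : List V) : (cyclicPairs c).length = c.length := by
  simp [cyclicPairs]

lemma MSW.getElem?_cyclicPairs (c : List V) (i : ℕ) (hi : i < c.length) :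
    (cyclicPairs c)[i]? = some (c.get ⟨i, hi⟩, c.get ⟨(i+1) % c.length, Nat.mod_lt _ (by omega)⟩) := by
  rw [cyclicPairs, List.getElem?_zip_eq_some]
  constructor
  · rw [List.getElem?_eq_getElem hi]; rfl
  · rw [List.getElem?_rotate hi, List.getElem?_eq_getElem (Nat.mod_lt _ (by omega))]; rfl

lemma MSW.cyclicPairs_rotate (c : List V) (k : ℕ) :
    cyclicPairs (c.rotate k) = (cyclicPairs c).rotate k := by
  apply List.ext_getElem?
  intro i
  by_cases hi : i < c.length
  · have h1 : ((cyclicPairs c).rotate k)[i]? = (cyclicPairs c)[(i + k) % c.length]? := by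
      rw [List.getElem?_rotate (by rwa [MSW.length_cyclicPairs]), MSW.length_cyclicPairs]
    rw [h1, MSW.getElem?_cyclicPairs c _ (Nat.mod_lt _ (by omega)),
      MSW.getElem?_cyclicPairs (c.rotate k) i (by rwa [List.length_rotate])]
    rw [Option.some_inj]
    have hr := List.length_rotate c k
    have g1 : ∀ (m : ℕ) (hm : m < (c.rotate k).length),
        (c.rotate k).get ⟨m, hm⟩ = c.get ⟨(m + k) % c.length, Nat.mod_lt _ (by omega)⟩ := by
      intro m hm
      rw [List.get_rotate]
    ext
    · dsimp only
      rw [g1]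
    · dsimp only
      rw [g1, MSW.get_congr c (i := ((i+1) % (c.rotate k).length + k) % c.length)
        (j := ((i + k) % c.length + 1) % c.length)]
      rw [hr, Nat.mod_add_mod, Nat.mod_add_mod]
      congr 1
      omega
  · rw [List.getElem?_eq_none, List.getElem?_eq_none] <;>
      simp [MSW.length_cyclicPairs] <;> omega

lemma MSW.chain'_cyclicPairs (c : List V) :
    List.Chain' (fun p q : V × V => p.2 = q.1) (cyclicPairs c) := by
  refine List.isChain_iff_getElem.mpr ?_
  intro i h
  have hlen := MSW.length_cyclicPairs c
  have hi : i < c.length := by omega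
  have hi1 : i + 1 < c.length := by omega
  have e1 : (cyclicPairs c)[i]? = some ((cyclicPairs c).get ⟨i, by omega⟩) :=
    List.getElem?_eq_getElem (by omega)
  have e2 : (cyclicPairs c)[i+1]? = some ((cyclicPairs c).get ⟨i+1, by omega⟩) :=
    List.getElem?_eq_getElem (by omega)
  rw [MSW.getElem?_cyclicPairs c i hi] at e1
  rw [MSW.getElem?_cyclicPairs c (i+1) hi1] at e2
  rw [Option.some_inj] at e1 e2
  show ((cyclicPairs c).get ⟨i, by omega⟩).2 = ((cyclicPairs c).get ⟨i+1, by omega⟩).1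
  rw [← e1, ← e2]
  exact MSW.get_congr c (Nat.mod_eq_of_lt hi1) _

/-- cyclic get at a `ZMod n` position -/
def MSW.zg {α : Type*} (n : ℕ) [NeZero n] (Q : List α) (z : ZMod n) : Option α := Q[z.val]?

namespace MSW

variable {α : Type*} {n : ℕ} [NeZero n]

lemma zg_eq_some (Q : List α) (hQ : Q.length = n) (z : ZMod n) :
    ∃ e, zg n Q z = some e :=
  ⟨_, List.getElem?_eq_getElem (by rw [hQ]; exact ZMod.val_lt z)⟩

lemma zg_natCast (Q : List α) (m : ℕ) :
    zg n Q (m : ZMod n) = Q[m % n]? := by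
  rw [zg, ZMod.val_natCast]

lemma zg_inj (Q : List α) (hnd : Q.Nodup) {z z' : ZMod n} {x : α}
    (h : zg n Q z = some x) (h' : zg n Q z' = some x) : z = z' := by
  rw [zg, List.getElem?_eq_some_iff] at h h'
  obtain ⟨hl, h⟩ := h
  obtain ⟨hl', h'⟩ := h'
  have : z.val = z'.val := (hnd.getElem_inj_iff).mp (h.trans h'.symm)
  exact ZMod.val_injective n this

lemma offset_of_infix {Q B : List α} {k : ℕ} (hQ : Q.length = n)
    (h : B <:+: Q.rotate k) :
    ∃ d : ZMod n, B.length ≤ n ∧ ∀ j : ℕ, j < B.length → B[j]? = zg n Q (d + (j : ℕ)) := by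
  obtain ⟨s, t, hst⟩ := h
  have hlen : s.length + B.length + t.length = n := by
    have := congrArg List.length hst
    simp [List.length_rotate, hQ] at this
    omega
  refine ⟨((k + s.length : ℕ) : ZMod n), by omega, fun j hj => ?_⟩
  have h1 : (Q.rotate k)[s.length + j]? = B[j]? := by
    rw [← hst, List.getElem?_append, if_pos (by simp only [List.length_append]; omega),
      List.getElem?_append, if_neg (by omega)]
    congr 1
    omega
  have h2 : (Q.rotate k)[s.length + j]? = Q[(s.length + j + k) % n]? := by
    rw [List.getElem?_rotate (by rw [hQ]; omega), hQ]
  have h3 : ((k + s.length : ℕ) : ZMod n) + (j : ℕ) = ((k + s.length + j : ℕ) : ZMod n) := by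
    push_cast; ring
  rw [← h1, h2, h3, zg_natCast Q]
  congr 2
  omega

lemma infix_of_offset {Q U : List α} (hQ : Q.length = n) (hU : U.length ≤ n) (d : ZMod n)
    (h : ∀ j : ℕ, j < U.length → U[j]? = zg n Q (d + (j : ℕ))) :
    ∃ k, U <:+: Q.rotate k := by
  refine ⟨d.val, ?_⟩
  have : U = (Q.rotate d.val).take U.length := by
    apply List.ext_getElem?
    intro j
    by_cases hj : j < U.length
    · rw [List.getElem?_take, if_pos hj, List.getElem?_rotate (by rw [hQ]; omega), hQ,
        h j hj, zg]
      congr 1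
      have : d + (j : ℕ) = ((d.val + j : ℕ) : ZMod n) := by
        push_cast
        rw [ZMod.natCast_val, ZMod.cast_id]
      rw [this, ZMod.val_natCast, Nat.add_comm]
    · rw [List.getElem?_take, if_neg hj, List.getElem?_eq_none (by omega)]
  rw [this]
  exact (List.take_prefix _ _).isInfix

end MSW

lemma MSW.length_zip_tail (W : List V) : (W.zip W.tail).length = W.length - 1 := by
  simp [List.length_zip]

lemma MSW.exists_walk_of_chain' : ∀ (A : List (V × V)), A ≠ [] →
    List.Chain' (fun p q : V × V => p.2 = q.1) A →
    ∃ W : List V, W.zip W.tail = A ∧ W.length = A.length + 1 := by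
  intro A
  induction A with
  | nil => intro h; exact absurd rfl h
  | cons e A ih =>
    intro _ hch
    cases A with
    | nil =>
      exact ⟨[e.1, e.2], by simp, by simp⟩
    | cons e' A' =>
      obtain ⟨he, hch'⟩ := List.isChain_cons_cons.mp hch
      obtain ⟨W', hW', hlen⟩ := ih (by simp) hch'
      match W', hW', hlen with
      | w0 :: w1 :: ws, hW', hlen =>
        have hw0 : w0 = e'.1 := by
          simp only [List.zip_cons_cons, List.tail_cons] at hW'
          have := (List.cons_eq_cons.mp hW').1
          rw [← this]
        refine ⟨e.1 :: w0 :: w1 :: ws, ?_, by simpa using hlen⟩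
        simp only [List.tail_cons, List.zip_cons_cons] at hW' ⊢
        rw [hW', hw0, ← he]
      | [w0], hW', _ => simp at hW'
      | [], hW', _ => simp at hW'

namespace MSW

variable {E : V → V → Prop}

lemma circ_pos {c : List V} (hc : IsEulerianCircuit E c) : 0 < (cyclicPairs c).length := by
  rw [length_cyclicPairs]
  exact List.length_pos_iff.mpr hc.1

lemma circ_length_eq [DecidableEq V] {c c' : List V}
    (hc : IsEulerianCircuit E c) (hc' : IsEulerianCircuit E c') :
    (cyclicPairs c).length = (cyclicPairs c').length := by
  have hf : (cyclicPairs c).toFinset = (cyclicPairs c').toFinset := by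
    ext p
    simp only [List.mem_toFinset, hc.2.2, hc'.2.2]
  rw [← List.toFinset_card_of_nodup hc.2.1, ← List.toFinset_card_of_nodup hc'.2.1, hf]

lemma appears_iff (q c : List V) :
    Appears q c ↔ ∃ k, (q.zip q.tail) <:+: (cyclicPairs c).rotate k := by
  unfold Appears
  constructor <;> rintro ⟨k, h⟩ <;> refine ⟨k, ?_⟩
  · rwa [cyclicPairs_rotate] at h
  · rwa [cyclicPairs_rotate]

lemma safe_offset {n : ℕ} [NeZero n] {W c : List V} (hW : IsSafe E W)
    (hc : IsEulerianCircuit E c) (hn : (cyclicPairs c).length = n) :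
    ∃ d : ZMod n, (W.zip W.tail).length ≤ n ∧
      ∀ j : ℕ, j < (W.zip W.tail).length → (W.zip W.tail)[j]? = zg n (cyclicPairs c) (d + (j : ℕ)) := by
  obtain ⟨k, hk⟩ := (appears_iff W c).mp (hW.2 c hc)
  exact offset_of_infix hn hk

/-- The element at relative position `t` from the occurrence of `x` is the same in
every Eulerian circuit, provided it is covered by a safe walk through `x`. -/
def Covered (E : V → V → Prop) (n : ℕ) [NeZero n] (x : V × V) (t : ZMod n) : Prop :=
  ∃ W b j, IsSafe E W ∧ (W.zip W.tail)[b]? = some x ∧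
    j < (W.zip W.tail).length ∧ (j : ZMod n) = t + (b : ℕ)

lemma covered_zg_eq [DecidableEq V] {n : ℕ} [NeZero n] {x : V × V} {t : ZMod n}
    (hcov : Covered E n x t) {c c' : List V}
    (hc : IsEulerianCircuit E c) (hc' : IsEulerianCircuit E c')
    (hnc : (cyclicPairs c).length = n) (hnc' : (cyclicPairs c').length = n)
    {p p' : ZMod n} (hp : zg n (cyclicPairs c) p = some x)
    (hp' : zg n (cyclicPairs c') p' = some x) :
    zg n (cyclicPairs c') (p' + t) = zg n (cyclicPairs c) (p + t) := by
  obtain ⟨W, b, j, hW, hb, hj, hjt⟩ := hcov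
  have hblt : b < (W.zip W.tail).length := by
    obtain ⟨h, -⟩ := List.getElem?_eq_some_iff.mp hb; exact h
  obtain ⟨d, -, hd⟩ := safe_offset (n := n) hW hc hnc
  obtain ⟨d', -, hd'⟩ := safe_offset (n := n) hW hc' hnc'
  have hdb : d + (b : ℕ) = p := zg_inj _ hc.2.1 ((hd b hblt).symm.trans hb) hp
  have hdb' : d' + (b : ℕ) = p' := zg_inj _ hc'.2.1 ((hd' b hblt).symm.trans hb) hp'
  have e1 : d + (j : ℕ) = p + t := by rw [hjt, ← hdb]; ring
  have e2 : d' + (j : ℕ) = p' + t := by rw [hjt, ← hdb']; ring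
  rw [← e1, ← e2, ← hd j hj, ← hd' j hj]

/-- Position of `x` in a circuit. -/
lemma exists_pos {n : ℕ} [NeZero n] {c : List V} (hc : IsEulerianCircuit E c)
    (hn : (cyclicPairs c).length = n) {x : V × V} (hx : E x.1 x.2) :
    ∃ p : ZMod n, zg n (cyclicPairs c) p = some x := by
  have hm : x ∈ cyclicPairs c := (hc.2.2 x).mpr hx
  obtain ⟨i, hi⟩ := List.mem_iff_getElem?.mp hm
  have hilt : i < n := by
    obtain ⟨hlt, -⟩ := List.getElem?_eq_some_iff.mp hi
    omega
  refine ⟨(i : ℕ), ?_⟩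
  rw [zg_natCast, Nat.mod_eq_of_lt hilt, hi]

lemma safe_edge_mem {c : List V} (hc : IsEulerianCircuit E c) {W : List V}
    (hW : IsSafe E W) {x : V × V} (hx : x ∈ W.zip W.tail) : E x.1 x.2 := by
  obtain ⟨k, hk⟩ := (appears_iff W c).mp (hW.2 c hc)
  have : x ∈ (cyclicPairs c).rotate k := hk.mem hx
  rw [List.mem_rotate] at this
  exact (hc.2.2 x).mp this

/-- Core extension lemma, left version: if the position just before a safe walk
is covered, the walk can be extended to a longer safe walk. -/
lemma safe_extend_left [DecidableEq V] {n : ℕ} [NeZero n] {c₀ : List V}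
    (hc₀ : IsEulerianCircuit E c₀) (hn₀ : (cyclicPairs c₀).length = n)
    {W : List V} {a : ℕ} {x : V × V} (hW : IsSafe E W)
    (hx : (W.zip W.tail)[a]? = some x)
    (hlen : (W.zip W.tail).length < n)
    (hcov : Covered E n x (-((a : ℕ) + 1))) :
    ∃ Wp, IsSafe E Wp ∧ SubwalkOf W Wp ∧ Wp.length = W.length + 1 := by
  classical
  set A := W.zip W.tail with hA
  have halt : a < A.length := by
    obtain ⟨h, -⟩ := List.getElem?_eq_some_iff.mp hx
    exact h
  set t : ZMod n := -((a : ℕ) + 1) with ht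
  have hxe : E x.1 x.2 := safe_edge_mem hc₀ hW (List.mem_iff_getElem?.mpr ⟨a, hx⟩)
  obtain ⟨p₀, hp₀⟩ := exists_pos (n := n) hc₀ hn₀ hxe
  obtain ⟨e, he⟩ := zg_eq_some (cyclicPairs c₀) hn₀ (p₀ + t)
  set U : List (V × V) := e :: A with hU
  have hUlen : U.length = A.length + 1 := by simp [hU]
  have key : ∀ c', IsEulerianCircuit E c' → ∃ k, U <:+: (cyclicPairs c').rotate k := by
    intro c' hc'
    have hn' : (cyclicPairs c').length = n := (circ_length_eq hc' hc₀).trans hn₀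
    obtain ⟨d', -, hd'⟩ := safe_offset (n := n) hW hc' hn'
    rw [← hA] at hd'
    have hp' : zg n (cyclicPairs c') (d' + (a : ℕ)) = some x := by
      rw [← hd' a halt]; exact hx
    have hcover : zg n (cyclicPairs c') (d' + (a : ℕ) + t) = some e := by
      rw [covered_zg_eq hcov hc₀ hc' hn₀ hn' hp₀ hp']
      exact he
    apply infix_of_offset hn' (by omega) (d' - 1)
    intro j hj
    rw [hUlen] at hj
    match j, hj with
    | 0, hj =>
      rw [hU, List.getElem?_cons_zero, Nat.cast_zero, add_zero]
      rw [show d' - 1 = d' + (a : ℕ) + t by rw [ht]; ring]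
      exact hcover.symm
    | (m+1), hj =>
      rw [hU, List.getElem?_cons_succ]
      rw [show d' - 1 + ((m+1 : ℕ) : ZMod n) = d' + (m : ℕ) by push_cast; ring]
      exact hd' m (by omega)
  obtain ⟨k₀, hk₀⟩ := key c₀ hc₀
  have hch : List.Chain' (fun p q : V × V => p.2 = q.1) U := by
    have := chain'_cyclicPairs (c₀.rotate k₀)
    rw [cyclicPairs_rotate] at this
    exact this.infix hk₀
  obtain ⟨Wp, hWp, hWplen⟩ := exists_walk_of_chain' U (by simp [hU]) hch
  have hsafe : IsSafe E Wp := by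
    constructor
    · omega
    · intro c' hc'
      rw [appears_iff, hWp]
      exact key c' hc'
  refine ⟨Wp, hsafe, ?_, ?_⟩
  · rw [SubwalkOf, hWp, ← hA, hU]
    exact ⟨[e], [], by simp⟩
  · have h2 : 2 ≤ W.length := hW.1
    have h3 : A.length = W.length - 1 := by rw [hA, length_zip_tail]
    omega

/-- Core extension lemma, right version. -/
lemma safe_extend_right [DecidableEq V] {n : ℕ} [NeZero n] {c₀ : List V}
    (hc₀ : IsEulerianCircuit E c₀) (hn₀ : (cyclicPairs c₀).length = n)
    {W : List V} {a : ℕ} {x : V × V} (hW : IsSafe E W)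
    (hx : (W.zip W.tail)[a]? = some x)
    (hlen : (W.zip W.tail).length < n)
    (hcov : Covered E n x ((((W.zip W.tail).length - a : ℕ) : ZMod n))) :
    ∃ Wp, IsSafe E Wp ∧ SubwalkOf W Wp ∧ Wp.length = W.length + 1 := by
  classical
  set A := W.zip W.tail with hA
  have halt : a < A.length := by
    obtain ⟨h, -⟩ := List.getElem?_eq_some_iff.mp hx
    exact h
  set t : ZMod n := (((A.length - a : ℕ) : ZMod n)) with ht
  have hxe : E x.1 x.2 := safe_edge_mem hc₀ hW (List.mem_iff_getElem?.mpr ⟨a, hx⟩)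
  obtain ⟨p₀, hp₀⟩ := exists_pos (n := n) hc₀ hn₀ hxe
  obtain ⟨e, he⟩ := zg_eq_some (cyclicPairs c₀) hn₀ (p₀ + t)
  set U : List (V × V) := A ++ [e] with hU
  have hUlen : U.length = A.length + 1 := by simp [hU]
  have key : ∀ c', IsEulerianCircuit E c' → ∃ k, U <:+: (cyclicPairs c').rotate k := by
    intro c' hc'
    have hn' : (cyclicPairs c').length = n := (circ_length_eq hc' hc₀).trans hn₀
    obtain ⟨d', -, hd'⟩ := safe_offset (n := n) hW hc' hn'
    rw [← hA] at hd'
    have hp' : zg n (cyclicPairs c') (d' + (a : ℕ)) = some x := by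
      rw [← hd' a halt]; exact hx
    have hcover : zg n (cyclicPairs c') (d' + (a : ℕ) + t) = some e := by
      rw [covered_zg_eq hcov hc₀ hc' hn₀ hn' hp₀ hp']
      exact he
    apply infix_of_offset hn' (by omega) d'
    intro j hj
    rw [hUlen] at hj
    by_cases hjA : j < A.length
    · rw [hU, List.getElem?_append, if_pos hjA]
      exact hd' j hjA
    · have hje : j = A.length := by omega
      subst hje
      rw [hU, List.getElem?_concat_length]
      rw [show d' + ((A.length : ℕ) : ZMod n) = d' + (a : ℕ) + t by
        rw [ht]; push_cast [Nat.cast_sub (le_of_lt halt)]; ring]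
      exact hcover.symm
  obtain ⟨k₀, hk₀⟩ := key c₀ hc₀
  have hch : List.Chain' (fun p q : V × V => p.2 = q.1) U := by
    have := chain'_cyclicPairs (c₀.rotate k₀)
    rw [cyclicPairs_rotate] at this
    exact this.infix hk₀
  obtain ⟨Wp, hWp, hWplen⟩ := exists_walk_of_chain' U (by simp [hU]) hch
  have hsafe : IsSafe E Wp := by
    constructor
    · omega
    · intro c' hc'
      rw [appears_iff, hWp]
      exact key c' hc'
  refine ⟨Wp, hsafe, ?_, ?_⟩
  · rw [SubwalkOf, hWp, ← hA, hU]
    exact ⟨[], [e], by simp⟩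
  · have h2 : 2 ≤ W.length := hW.1
    have h3 : A.length = W.length - 1 := by rw [hA, length_zip_tail]
    omega

lemma maxsafe_not_covered_left [DecidableEq V] {n : ℕ} [NeZero n] {c₀ : List V}
    (hc₀ : IsEulerianCircuit E c₀) (hn₀ : (cyclicPairs c₀).length = n)
    {W : List V} {a : ℕ} {x : V × V} (hW : IsMaxSafe E W)
    (hx : (W.zip W.tail)[a]? = some x)
    (hlen : (W.zip W.tail).length < n)
    (hcov : Covered E n x (-((a : ℕ) + 1))) :
    False := by
  obtain ⟨Wp, h1, h2, h3⟩ := safe_extend_left hc₀ hn₀ hW.1 hx hlen hcov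
  have := hW.2 Wp h1 h2
  omega

lemma maxsafe_not_covered_right [DecidableEq V] {n : ℕ} [NeZero n] {c₀ : List V}
    (hc₀ : IsEulerianCircuit E c₀) (hn₀ : (cyclicPairs c₀).length = n)
    {W : List V} {a : ℕ} {x : V × V} (hW : IsMaxSafe E W)
    (hx : (W.zip W.tail)[a]? = some x)
    (hlen : (W.zip W.tail).length < n)
    (hcov : Covered E n x ((((W.zip W.tail).length - a : ℕ) : ZMod n))) :
    False := by
  obtain ⟨Wp, h1, h2, h3⟩ := safe_extend_right hc₀ hn₀ hW.1 hx hlen hcov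
  have := hW.2 Wp h1 h2
  omega

/-- The main rigidity lemma: two maximal safe walks sharing an edge have the
same edge set. -/
lemma maxsafe_toFinset_eq [DecidableEq V] {c₀ : List V} (hc₀ : IsEulerianCircuit E c₀)
    {W W' : List V} {x : V × V} (hW : IsMaxSafe E W) (hW' : IsMaxSafe E W')
    (hx : x ∈ W.zip W.tail) (hx' : x ∈ W'.zip W'.tail) :
    (W.zip W.tail).toFinset = (W'.zip W'.tail).toFinset := by
  classical
  set n := (cyclicPairs c₀).length with hn
  haveI : NeZero n := ⟨(circ_pos hc₀).ne'⟩
  set A := W.zip W.tail with hA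
  set B := W'.zip W'.tail with hB
  obtain ⟨a, ha⟩ := List.mem_iff_getElem?.mp hx
  obtain ⟨b, hb⟩ := List.mem_iff_getElem?.mp hx'
  have halt : a < A.length := by
    obtain ⟨h, -⟩ := List.getElem?_eq_some_iff.mp ha; exact h
  have hblt : b < B.length := by
    obtain ⟨h, -⟩ := List.getElem?_eq_some_iff.mp hb; exact h
  obtain ⟨kA, hkA⟩ := (appears_iff W c₀).mp (hW.1.2 c₀ hc₀)
  obtain ⟨kB, hkB⟩ := (appears_iff W' c₀).mp (hW'.1.2 c₀ hc₀)
  have hAle : A.length ≤ n := by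
    have := hkA.length_le
    rwa [List.length_rotate] at this
  have hBle : B.length ≤ n := by
    have := hkB.length_le
    rwa [List.length_rotate] at this
  -- full edge-set case helper
  have full_case : ∀ (C : List (V × V)) (k : ℕ), C <:+: (cyclicPairs c₀).rotate k →
      C.length = n → C.toFinset = (cyclicPairs c₀).toFinset := by
    intro C k hik hlen
    have : C = (cyclicPairs c₀).rotate k :=
      hik.eq_of_length (by rw [List.length_rotate, ← hn, hlen])
    rw [this]
    ext p
    simp [List.mem_rotate]
  -- covered positions: everything within distance of an occurrence index
  have cov_mk : ∀ (W'' : List V) (b'' j : ℕ), IsSafe E W'' →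
      (W''.zip W''.tail)[b'']? = some x → j < (W''.zip W''.tail).length →
      ∀ t : ZMod n, (j : ZMod n) = t + (b'' : ℕ) → Covered E n x t := by
    intro W'' b'' j h1 h2 h3 t h4
    exact ⟨W'', b'', j, h1, h2, h3, h4⟩
  by_cases hAfull : A.length = n
  · by_cases hBfull : B.length = n
    · rw [full_case A kA hkA hAfull, full_case B kB hkB hBfull]
    · -- extend W' using coverage from A (which covers all positions)
      exfalso
      have hBlt : B.length < n := by omega
      refine maxsafe_not_covered_left hc₀ hn.symm hW' hb hBlt ?_
      refine cov_mk W a ((-((b:ℕ)+1) + (a:ℕ) : ZMod n).val) hW.1 ha ?_ _ ?_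
      · rw [← hA, hAfull]; exact ZMod.val_lt _
      · rw [ZMod.natCast_val, ZMod.cast_id]
  · by_cases hBfull : B.length = n
    · exfalso
      have hAlt : A.length < n := by omega
      refine maxsafe_not_covered_left hc₀ hn.symm hW ha hAlt ?_
      refine cov_mk W' b ((-((a:ℕ)+1) + (b:ℕ) : ZMod n).val) hW'.1 hb ?_ _ ?_
      · rw [← hB, hBfull]; exact ZMod.val_lt _
      · rw [ZMod.natCast_val, ZMod.cast_id]
    · -- both strictly smaller than n
      have hAlt : A.length < n := by omega
      have hBlt : B.length < n := by omega
      -- rule out b > a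
      have hba : b ≤ a := by
        by_contra hcon
        push_neg at hcon
        refine maxsafe_not_covered_left hc₀ hn.symm hW ha hAlt ?_
        refine cov_mk W' b (b - a - 1) hW'.1 hb (show b - a - 1 < (W'.zip W'.tail).length by rw [← hB]; omega) _ ?_
        have : (b : ℕ) - a - 1 = b - (a + 1) := by omega
        rw [this, Nat.cast_sub (by omega)]
        push_cast
        ring
      have hab : a ≤ b := by
        by_contra hcon
        push_neg at hcon
        refine maxsafe_not_covered_left hc₀ hn.symm hW' hb hBlt ?_
        refine cov_mk W a (a - b - 1) hW.1 ha (show a - b - 1 < (W.zip W.tail).length by rw [← hA]; omega) _ ?_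
        have : (a : ℕ) - b - 1 = a - (b + 1) := by omega
        rw [this, Nat.cast_sub (by omega)]
        push_cast
        ring
      have haeb : a = b := le_antisymm hab hba
      -- rule out B extending further right
      have hr1 : B.length - b ≤ A.length - a := by
        by_contra hcon
        push_neg at hcon
        refine maxsafe_not_covered_right hc₀ hn.symm hW ha hAlt ?_
        refine cov_mk W' b (b + (A.length - a)) hW'.1 hb (show b + (A.length - a) < (W'.zip W'.tail).length by rw [← hB]; omega) _ ?_
        rw [← hA]
        push_cast [Nat.cast_sub (le_of_lt halt)]
        ring
      have hr2 : A.length - a ≤ B.length - b := by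
        by_contra hcon
        push_neg at hcon
        refine maxsafe_not_covered_right hc₀ hn.symm hW' hb hBlt ?_
        refine cov_mk W a (a + (B.length - b)) hW.1 ha (show a + (B.length - b) < (W.zip W.tail).length by rw [← hA]; omega) _ ?_
        rw [← hB]
        push_cast [Nat.cast_sub (le_of_lt hblt)]
        ring
      have hABlen : A.length = B.length := by omega
      -- now A = B
      obtain ⟨d, -, hd⟩ := offset_of_infix (n := n) hn.symm hkA
      obtain ⟨d', -, hd'⟩ := offset_of_infix (n := n) hn.symm hkB
      rw [← hA] at hd
      rw [← hB] at hd'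
      have hnd := hc₀.2.1
      have hdd : d = d' := by
        have h1 : zg n (cyclicPairs c₀) (d + (a:ℕ)) = some x := by rw [← hd a halt]; exact ha
        have h2 : zg n (cyclicPairs c₀) (d' + (b:ℕ)) = some x := by rw [← hd' b hblt]; exact hb
        have := zg_inj _ hnd h1 h2
        rw [haeb] at this
        exact add_right_cancel this
      have : A = B := by
        apply List.ext_getElem?
        intro j
        by_cases hj : j < A.length
        · rw [hd j hj, hdd, ← hd' j (by omega)]
        · rw [List.getElem?_eq_none (by omega), List.getElem?_eq_none (by omega)]
      rw [this]

/-- Every edge lies on some maximal safe walk. -/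
lemma exists_maxsafe [DecidableEq V] {c₀ : List V} (hc₀ : IsEulerianCircuit E c₀)
    {u v : V} (huv : E u v) :
    ∃ W, IsMaxSafe E W ∧ (u, v) ∈ W.zip W.tail := by
  classical
  set n := (cyclicPairs c₀).length with hn
  haveI : NeZero n := ⟨(circ_pos hc₀).ne'⟩
  -- the single edge walk is safe
  have hsingle : IsSafe E [u, v] := by
    refine ⟨by simp, fun c' hc' => ?_⟩
    have hn' : (cyclicPairs c').length = n := (circ_length_eq hc' hc₀).trans hn
    haveI : NeZero n := ⟨(circ_pos hc₀).ne'⟩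
    obtain ⟨p, hp⟩ := exists_pos (n := n) hc' hn' (x := (u, v)) huv
    rw [appears_iff]
    apply infix_of_offset hn' (by
      have h0 := circ_pos (E := E) hc₀
      rw [← hn] at h0
      simp
      omega) p
    intro j hj
    simp only [List.zip_cons_cons, List.tail_cons, List.zip_nil_right, List.length_cons,
      List.length_nil] at hj ⊢
    interval_cases j
    · simpa using hp.symm
  -- lengths of safe walks are bounded by n + 1
  have hbound : ∀ W : List V, IsSafe E W → W.length ≤ n + 1 := by
    intro W hW
    obtain ⟨k, hk⟩ := (appears_iff W c₀).mp (hW.2 c₀ hc₀)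
    have h1 := hk.length_le
    rw [List.length_rotate, ← hn] at h1
    have h2 := length_zip_tail W
    have := hW.1
    omega
  -- take a safe walk through (u,v) of maximal length
  set P : ℕ → Prop := fun m => ∃ W : List V, IsSafe E W ∧ (u, v) ∈ W.zip W.tail ∧ W.length = m
    with hP
  have hP2 : P 2 := ⟨[u, v], hsingle, by simp, by simp⟩
  have h2n : 2 ≤ n + 1 := by
    have := hbound [u, v] hsingle
    simpa using this
  obtain ⟨W, hWsafe, hWmem, hWlen⟩ := Nat.findGreatest_spec (P := P) h2n hP2
  refine ⟨W, ⟨hWsafe, ?_⟩, hWmem⟩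
  intro W'' hW'' hsub
  have hmem'' : (u, v) ∈ W''.zip W''.tail := hsub.mem hWmem
  have hle : W''.length ≤ Nat.findGreatest P (n + 1) :=
    Nat.le_findGreatest (hbound W'' hW'') ⟨W'', hW'', hmem'', rfl⟩
  have h1 := hsub.length_le
  have h2 := length_zip_tail W
  have h3 := length_zip_tail W''
  have h4 := hWsafe.1
  have h5 := hW''.1
  omega

end MSW

end Aux

/-- Distinct maximal safe walks are edge-disjoint (up to having the same edge set),
and the total number of edges of all maximal safe walks equals `|E|`. -/
theorem maximal_safe_walks_partition_edges {V : Type*} [Fintype V] [DecidableEq V]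
    (E : V → V → Prop)
    (hloop : ∀ x : V, ¬ E x x) (hconn : (underlyingUG E).Connected)
    (heul : ∃ c : List V, IsEulerianCircuit E c) :
    (∀ W W' : List V, IsMaxSafe E W → IsMaxSafe E W' →
      (W.zip W.tail).toFinset = (W'.zip W'.tail).toFinset ∨
        ∀ e ∈ W.zip W.tail, e ∉ W'.zip W'.tail) ∧
    ∃ S : Finset (List V),
      (∀ W ∈ S, IsMaxSafe E W) ∧
      (∀ W : List V, IsMaxSafe E W →
        ∃ W' ∈ S, (W.zip W.tail).toFinset = (W'.zip W'.tail).toFinset) ∧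
      (∀ W ∈ S, ∀ W' ∈ S, W ≠ W' → ∀ e ∈ W.zip W.tail, e ∉ W'.zip W'.tail) ∧
      (∑ W ∈ S, (W.length - 1)) = Set.ncard {p : V × V | E p.1 p.2} := by
  classical
  obtain ⟨c₀, hc₀⟩ := heul
  have part1 : ∀ W W' : List V, IsMaxSafe E W → IsMaxSafe E W' →
      (W.zip W.tail).toFinset = (W'.zip W'.tail).toFinset ∨
        ∀ e ∈ W.zip W.tail, e ∉ W'.zip W'.tail := by
    intro W W' hW hW'
    by_cases h : ∃ x, x ∈ W.zip W.tail ∧ x ∈ W'.zip W'.tail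
    · obtain ⟨x, hx, hx'⟩ := h
      exact Or.inl (MSW.maxsafe_toFinset_eq hc₀ hW hW' hx hx')
    · push_neg at h
      exact Or.inr h
  refine ⟨part1, ?_⟩
  -- canonical representative of an edge-set
  set g : Finset (V × V) → List V := fun F =>
    if h : ∃ W, IsMaxSafe E W ∧ (W.zip W.tail).toFinset = F then h.choose else [] with hg
  have hgspec : ∀ F, (∃ W, IsMaxSafe E W ∧ (W.zip W.tail).toFinset = F) →
      IsMaxSafe E (g F) ∧ ((g F).zip (g F).tail).toFinset = F := by
    intro F hF
    rw [hg]
    simp only [dif_pos hF]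
    exact hF.choose_spec
  -- a maximal safe walk through each edge
  have hthrough : ∀ p : V × V, p ∈ cyclicPairs c₀ → ∃ W, IsMaxSafe E W ∧ p ∈ W.zip W.tail := by
    intro p hp
    obtain ⟨W, h1, h2⟩ := MSW.exists_maxsafe hc₀ ((hc₀.2.2 p).mp hp)
    exact ⟨W, h1, h2⟩
  set A0 : (V × V) → List V := fun p =>
    if h : ∃ W, IsMaxSafe E W ∧ p ∈ W.zip W.tail then h.choose else [] with hA0
  have hA0spec : ∀ p ∈ cyclicPairs c₀, IsMaxSafe E (A0 p) ∧ p ∈ (A0 p).zip (A0 p).tail := by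
    intro p hp
    rw [hA0]
    simp only [dif_pos (hthrough p hp)]
    exact (hthrough p hp).choose_spec
  set f : (V × V) → List V := fun p => g (((A0 p).zip (A0 p).tail).toFinset) with hf
  have hfspec : ∀ p ∈ cyclicPairs c₀, IsMaxSafe E (f p) ∧
      ((f p).zip (f p).tail).toFinset = ((A0 p).zip (A0 p).tail).toFinset := by
    intro p hp
    exact hgspec _ ⟨A0 p, (hA0spec p hp).1, rfl⟩
  set S : Finset (List V) := (cyclicPairs c₀).toFinset.image f with hS
  have hmemS : ∀ W ∈ S, ∃ p ∈ cyclicPairs c₀, f p = W := by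
    intro W hW
    rw [hS] at hW
    obtain ⟨p, hp, hfp⟩ := Finset.mem_image.mp hW
    exact ⟨p, List.mem_toFinset.mp hp, hfp⟩
  have hSmax : ∀ W ∈ S, IsMaxSafe E W := by
    intro W hW
    obtain ⟨p, hp, hfp⟩ := hmemS W hW
    rw [← hfp]
    exact (hfspec p hp).1
  refine ⟨S, hSmax, ?_, ?_, ?_⟩
  · -- every maximal safe walk is represented
    intro W hW
    have hne : W.zip W.tail ≠ [] := by
      have h1 := hW.1.1
      have h2 := MSW.length_zip_tail W
      intro h
      rw [h] at h2
      simp at h2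
      omega
    obtain ⟨x, hx⟩ := List.exists_mem_of_ne_nil _ hne
    have hxE : E x.1 x.2 := MSW.safe_edge_mem hc₀ hW.1 hx
    have hxc : x ∈ cyclicPairs c₀ := (hc₀.2.2 x).mpr hxE
    refine ⟨f x, ?_, ?_⟩
    · rw [hS]
      exact Finset.mem_image.mpr ⟨x, List.mem_toFinset.mpr hxc, rfl⟩
    · have h1 := hA0spec x hxc
      have h2 := hfspec x hxc
      rw [h2.2]
      exact MSW.maxsafe_toFinset_eq hc₀ hW h1.1 hx h1.2
  · -- pairwise edge-disjointness
    intro W hWS W' hWS' hne e he he'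
    have hW := hSmax W hWS
    have hW' := hSmax W' hWS'
    have heq : (W.zip W.tail).toFinset = (W'.zip W'.tail).toFinset :=
      MSW.maxsafe_toFinset_eq hc₀ hW hW' he he'
    obtain ⟨p, hp, hfp⟩ := hmemS W hWS
    obtain ⟨q, hq, hfq⟩ := hmemS W' hWS'
    have h1 := (hfspec p hp).2
    have h2 := (hfspec q hq).2
    rw [hfp] at h1
    rw [hfq] at h2
    have : ((A0 p).zip (A0 p).tail).toFinset = ((A0 q).zip (A0 q).tail).toFinset := by
      rw [← h1, ← h2, heq]
    apply hne
    rw [← hfp, ← hfq, hf]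
    simp only []
    rw [this]
  · -- the sum of lengths
    have hnodup : ∀ W, IsSafe E W → (W.zip W.tail).Nodup := by
      intro W hW
      obtain ⟨k, hk⟩ := (MSW.appears_iff W c₀).mp (hW.2 c₀ hc₀)
      exact hk.sublist.nodup (List.nodup_rotate.mpr hc₀.2.1)
    have hcard : ∀ W ∈ S, W.length - 1 = (W.zip W.tail).toFinset.card := by
      intro W hW
      rw [List.toFinset_card_of_nodup (hnodup W (hSmax W hW).1), MSW.length_zip_tail]
    have hdisj : ∀ W ∈ S, ∀ W' ∈ S, W ≠ W' →
        Disjoint (W.zip W.tail).toFinset (W'.zip W'.tail).toFinset := by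
      intro W hWS W' hWS' hne
      rw [Finset.disjoint_left]
      intro e he he'
      rw [List.mem_toFinset] at he he'
      have hW := hSmax W hWS
      have hW' := hSmax W' hWS'
      have heq : (W.zip W.tail).toFinset = (W'.zip W'.tail).toFinset :=
        MSW.maxsafe_toFinset_eq hc₀ hW hW' he he'
      obtain ⟨p, hp, hfp⟩ := hmemS W hWS
      obtain ⟨q, hq, hfq⟩ := hmemS W' hWS'
      have h1 := (hfspec p hp).2
      have h2 := (hfspec q hq).2
      rw [hfp] at h1
      rw [hfq] at h2
      apply hne
      rw [← hfp, ← hfq, hf]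
      simp only []
      rw [show ((A0 p).zip (A0 p).tail).toFinset = ((A0 q).zip (A0 q).tail).toFinset by
        rw [← h1, ← h2, heq]]
    have hbiU : S.biUnion (fun W => (W.zip W.tail).toFinset) = (cyclicPairs c₀).toFinset := by
      ext e
      rw [Finset.mem_biUnion]
      constructor
      · rintro ⟨W, hWS, he⟩
        rw [List.mem_toFinset] at he ⊢
        exact (hc₀.2.2 e).mpr (MSW.safe_edge_mem hc₀ (hSmax W hWS).1 he)
      · intro he
        rw [List.mem_toFinset] at he
        refine ⟨f e, ?_, ?_⟩
        · rw [hS]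
          exact Finset.mem_image.mpr ⟨e, List.mem_toFinset.mpr he, rfl⟩
        · rw [(hfspec e he).2, List.mem_toFinset]
          exact (hA0spec e he).2
    have hsum : (∑ W ∈ S, (W.length - 1)) = (cyclicPairs c₀).toFinset.card := by
      rw [Finset.sum_congr rfl hcard, ← Finset.card_biUnion hdisj, hbiU]
    rw [hsum]
    have hset : {p : V × V | E p.1 p.2} = ((cyclicPairs c₀).toFinset : Set (V × V)) := by
      ext p
      simp only [Set.mem_setOf_eq, Finset.coe_sort_coe, Finset.mem_coe, List.mem_toFinset]
      exact (hc₀.2.2 p).symm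
    rw [hset, Set.ncard_coe_finset]
end

section
/- Let G be a directed Eulerian graph without parallel edges or self-loops, let v be a node with in-neighbors u1, u2 and out-neighbors w1, w2 (d(v) = 2) that is not a cut node of U(G). Let G' be obtained from G by deleting v and its incident edges and adding new nodes v1, v2 with edges (u1,v1), (v1,w2), (u2,v2), (v2,w1). Then G' is Eulerian, and every Eulerian circuit of G' yields an Eulerian circuit of G by replacing each traversal of (u_i, v_i', w_j) with (u_i, v, w_j). -/
/-- The modified graph `G'` of Case 2: delete `v`, add new nodes `v1, v2` and the
length-two paths `(u1, v1, w2)` and `(u2, v2, w1)`. `Sum.inr false` is `v1`,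
`Sum.inr true` is `v2`. -/
def modifiedRel {V : Type*} (E : V → V → Prop) (v u1 u2 w1 w2 : V) :
    ({x : V // x ≠ v} ⊕ Bool) → ({x : V // x ≠ v} ⊕ Bool) → Prop
  | Sum.inl a, Sum.inl b => E a.1 b.1
  | Sum.inl a, Sum.inr false => a.1 = u1
  | Sum.inl a, Sum.inr true => a.1 = u2
  | Sum.inr false, Sum.inl b => b.1 = w2
  | Sum.inr true, Sum.inl b => b.1 = w1
  | Sum.inr _, Sum.inr _ => False

/-- Projection from `G'` back to `G`, sending both `v1` and `v2` to `v`. -/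
def modifiedProj {V : Type*} (v : V) : ({x : V // x ≠ v} ⊕ Bool) → V
  | Sum.inl a => a.1
  | Sum.inr _ => v

lemma zip_filter_snd {V : Type*} [DecidableEq V] (x : V) :
    ∀ (a b : List V), a.length = b.length →
      ((a.zip b).filter (fun p => decide (p.2 = x))).length = b.count x := by
  intro a
  induction a with
  | nil =>
    intro b hb
    have : b = [] := by simpa using hb.symm
    simp [this]
  | cons h t ih =>
    intro b hb
    cases b with
    | nil => simp at hb
    | cons y t' =>
      simp only [List.length_cons, Nat.add_right_cancel_iff] at hb
      by_cases hy : y = x <;>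
        simp [List.zip_cons_cons, List.filter_cons, List.count_cons, hy, ih t' hb]

lemma zip_filter_fst {V : Type*} [DecidableEq V] (x : V) :
    ∀ (a b : List V), a.length = b.length →
      ((a.zip b).filter (fun p => decide (p.1 = x))).length = a.count x := by
  intro a
  induction a with
  | nil => intro b hb; simp
  | cons h t ih =>
    intro b hb
    cases b with
    | nil => simp at hb
    | cons y t' =>
      simp only [List.length_cons, Nat.add_right_cancel_iff] at hb
      by_cases hy : h = x <;>
        simp [List.zip_cons_cons, List.filter_cons, List.count_cons, hy, ih t' hb]

lemma ncard_list_snd {V : Type*} [DecidableEq V] (l : List (V × V)) (hl : l.Nodup) (x : V) :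
    Set.ncard {u | (u, x) ∈ l} = ((l.filter (fun p => decide (p.2 = x)))).length := by
  set m := (l.filter (fun p => decide (p.2 = x))).map Prod.fst with hm
  have hmnd : m.Nodup := by
    refine List.Nodup.map_on ?_ (hl.filter _)
    intro p hp q hq hpq
    have hp2 : p.2 = x := by simpa using (List.mem_filter.1 hp).2
    have hq2 : q.2 = x := by simpa using (List.mem_filter.1 hq).2
    exact Prod.ext hpq (hp2.trans hq2.symm)
  have hset : {u | (u, x) ∈ l} = {u | u ∈ m} := by
    ext u
    simp only [Set.mem_setOf_eq, hm, List.mem_map, List.mem_filter, decide_eq_true_eq]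
    constructor
    · intro h; exact ⟨(u, x), ⟨h, rfl⟩, rfl⟩
    · rintro ⟨p, ⟨hp, hp2⟩, hp1⟩
      have : p = (u, x) := Prod.ext hp1 hp2
      rwa [this] at hp
  rw [hset]
  have : {u | u ∈ m} = ↑m.toFinset := by ext u; simp
  rw [this, Set.ncard_coe_finset, List.toFinset_card_of_nodup hmnd, hm, List.length_map]

lemma ncard_list_fst {V : Type*} [DecidableEq V] (l : List (V × V)) (hl : l.Nodup) (x : V) :
    Set.ncard {w | (x, w) ∈ l} = ((l.filter (fun p => decide (p.1 = x)))).length := by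
  set m := (l.filter (fun p => decide (p.1 = x))).map Prod.snd with hm
  have hmnd : m.Nodup := by
    refine List.Nodup.map_on ?_ (hl.filter _)
    intro p hp q hq hpq
    have hp2 : p.1 = x := by simpa using (List.mem_filter.1 hp).2
    have hq2 : q.1 = x := by simpa using (List.mem_filter.1 hq).2
    exact Prod.ext (hp2.trans hq2.symm) hpq
  have hset : {w | (x, w) ∈ l} = {w | w ∈ m} := by
    ext u
    simp only [Set.mem_setOf_eq, hm, List.mem_map, List.mem_filter, decide_eq_true_eq]
    constructor
    · intro h; exact ⟨(x, u), ⟨h, rfl⟩, rfl⟩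
    · rintro ⟨p, ⟨hp, hp1⟩, hp2⟩
      have : p = (x, u) := Prod.ext hp1 hp2
      rwa [this] at hp
  rw [hset]
  have : {w | w ∈ m} = ↑m.toFinset := by ext u; simp
  rw [this, Set.ncard_coe_finset, List.toFinset_card_of_nodup hmnd, hm, List.length_map]

lemma eulerian_balanced {V : Type*} (E : V → V → Prop) (c : List V)
    (hc : IsEulerianCircuit E c) (x : V) : indeg E x = outdeg E x := by
  classical
  obtain ⟨-, hnd, hmem⟩ := hc
  have h1 : {u | E u x} = {u | (u, x) ∈ cyclicPairs c} := by
    ext u; simpa using (hmem (u, x)).symm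
  have h2 : {w | E x w} = {w | (x, w) ∈ cyclicPairs c} := by
    ext w; simpa using (hmem (x, w)).symm
  have hlen : c.length = (c.rotate 1).length := (List.length_rotate c 1).symm
  rw [indeg, outdeg, h1, h2, ncard_list_snd _ hnd, ncard_list_fst _ hnd,
    cyclicPairs, zip_filter_snd x c (c.rotate 1) hlen, zip_filter_fst x c (c.rotate 1) hlen,
    ((List.rotate_perm c 1).count_eq x)]
lemma proj_edge {V : Type*} {E : V → V → Prop} {v u1 u2 w1 w2 : V}
    (hEu1 : E u1 v) (hEu2 : E u2 v) (hEw1 : E v w1) (hEw2 : E v w2)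
    {a b : {x : V // x ≠ v} ⊕ Bool} (h : modifiedRel E v u1 u2 w1 w2 a b) :
    E (modifiedProj v a) (modifiedProj v b) := by
  rcases a with a | a <;> rcases b with b | b
  · exact h
  · cases b
    · simp only [modifiedRel] at h; simp only [modifiedProj, h]; exact hEu1
    · simp only [modifiedRel] at h; simp only [modifiedProj, h]; exact hEu2
  · cases a
    · simp only [modifiedRel] at h; simp only [modifiedProj, h]; exact hEw2
    · simp only [modifiedRel] at h; simp only [modifiedProj, h]; exact hEw1
  · cases a <;> cases b <;> exact h.elim

lemma proj_inj {V : Type*} {E : V → V → Prop} {v u1 u2 w1 w2 : V}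
    (hu12 : u1 ≠ u2) (hw12 : w1 ≠ w2)
    (p q : ({x : V // x ≠ v} ⊕ Bool) × ({x : V // x ≠ v} ⊕ Bool))
    (hp : modifiedRel E v u1 u2 w1 w2 p.1 p.2) (hq : modifiedRel E v u1 u2 w1 w2 q.1 q.2)
    (h1 : modifiedProj v p.1 = modifiedProj v q.1)
    (h2 : modifiedProj v p.2 = modifiedProj v q.2) : p = q := by
  obtain ⟨p1, p2⟩ := p
  obtain ⟨q1, q2⟩ := q
  simp only at hp hq h1 h2 ⊢
  rcases p1 with a | a <;> rcases q1 with a' | a'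
  · -- both inl
    have haa : a = a' := Subtype.ext h1
    subst haa
    rcases p2 with c | c <;> rcases q2 with c' | c'
    · exact congrArg _ (congrArg _ (Subtype.ext h2))
    · exact absurd h2 c.2
    · exact absurd h2.symm c'.2
    · cases c <;> cases c'
      · rfl
      · simp only [modifiedRel] at hp hq; exact absurd (hp.symm.trans hq) hu12
      · simp only [modifiedRel] at hp hq; exact absurd (hq.symm.trans hp) hu12
      · rfl
  · exact absurd h1 (fun h => a.2 (by simpa [modifiedProj] using h))
  · exact absurd h1.symm (fun h => a'.2 (by simpa [modifiedProj] using h))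
  · -- both inr
    rcases p2 with c | c
    · rcases q2 with c' | c'
      · have hcc : c = c' := Subtype.ext h2
        subst hcc
        cases a <;> cases a'
        · rfl
        · simp only [modifiedRel] at hp hq; exact absurd (hp.symm.trans hq) hw12.symm
        · simp only [modifiedRel] at hp hq; exact absurd (hq.symm.trans hp) hw12.symm
        · rfl
      · cases a' <;> exact hq.elim
    · cases a <;> exact hp.elim

/-- If `d(v) = 2` and `v` is not a cut node of `U(G)`, then `G'` is Eulerian (balanced
and weakly connected), and every Eulerian circuit of `G'` yields an Eulerian circuit of
`G` by replacing each traversal of `(u_i, v_i, w_j)` by `(u_i, v, w_j)`. -/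
theorem modified_graph_eulerian {V : Type*} [Fintype V] (E : V → V → Prop)
    (hloop : ∀ x : V, ¬ E x x) (hconn : (underlyingUG E).Connected)
    (heul : ∃ c : List V, IsEulerianCircuit E c)
    (v u1 u2 w1 w2 : V) (hu12 : u1 ≠ u2) (hw12 : w1 ≠ w2)
    (hin : {u : V | E u v} = {u1, u2}) (hout : {w : V | E v w} = {w1, w2})
    (hnotcut : ¬ IsCutNode (underlyingUG E) v) :
    (∀ x, indeg (modifiedRel E v u1 u2 w1 w2) x = outdeg (modifiedRel E v u1 u2 w1 w2) x) ∧
    (underlyingUG (modifiedRel E v u1 u2 w1 w2)).Connected ∧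
    ∀ c' : List ({x : V // x ≠ v} ⊕ Bool),
      IsEulerianCircuit (modifiedRel E v u1 u2 w1 w2) c' →
        IsEulerianCircuit E (c'.map (modifiedProj v)) := by
  classical
  obtain ⟨c, hc⟩ := heul
  have hEu1 : E u1 v := by
    have : u1 ∈ {u : V | E u v} := by rw [hin]; simp
    exact this
  have hEu2 : E u2 v := by
    have : u2 ∈ {u : V | E u v} := by rw [hin]; simp
    exact this
  have hEw1 : E v w1 := by
    have : w1 ∈ {w : V | E v w} := by rw [hout]; simp
    exact this
  have hEw2 : E v w2 := by
    have : w2 ∈ {w : V | E v w} := by rw [hout]; simp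
    exact this
  have hu1v : u1 ≠ v := fun h => hloop v (h ▸ hEu1)
  have hu2v : u2 ≠ v := fun h => hloop v (h ▸ hEu2)
  have hw1v : w1 ≠ v := fun h => hloop v (h ▸ hEw1)
  have hw2v : w2 ≠ v := fun h => hloop v (h ▸ hEw2)
  have hinv : ∀ x, E x v ↔ (x = u1 ∨ x = u2) := fun x => by
    have := Set.ext_iff.1 hin x; simpa using this
  have houtv : ∀ x, E v x ↔ (x = w1 ∨ x = w2) := fun x => by
    have := Set.ext_iff.1 hout x; simpa using this
  refine ⟨?_, ?_, ?_⟩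
  · -- degrees balanced
    intro x
    rcases x with a | b
    · -- old node
      have hin_img : modifiedProj v '' {y | modifiedRel E v u1 u2 w1 w2 y (Sum.inl a)}
          = {u | E u a.1} := by
        ext u
        constructor
        · rintro ⟨y, hy, rfl⟩
          exact proj_edge hEu1 hEu2 hEw1 hEw2 hy
        · intro hu
          by_cases huv : u = v
          · subst huv
            rcases (houtv a.1).1 hu with h | h
            · exact ⟨Sum.inr true, h, rfl⟩
            · exact ⟨Sum.inr false, h, rfl⟩
          · exact ⟨Sum.inl ⟨u, huv⟩, hu, rfl⟩
      have hout_img : modifiedProj v '' {y | modifiedRel E v u1 u2 w1 w2 (Sum.inl a) y}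
          = {w | E a.1 w} := by
        ext u
        constructor
        · rintro ⟨y, hy, rfl⟩
          exact proj_edge hEu1 hEu2 hEw1 hEw2 hy
        · intro hu
          by_cases huv : u = v
          · subst huv
            rcases (hinv a.1).1 hu with h | h
            · exact ⟨Sum.inr false, h, rfl⟩
            · exact ⟨Sum.inr true, h, rfl⟩
          · exact ⟨Sum.inl ⟨u, huv⟩, hu, rfl⟩
      have hin_inj : Set.InjOn (modifiedProj v)
          {y | modifiedRel E v u1 u2 w1 w2 y (Sum.inl a)} := by
        intro y hy z hz hyz
        have := proj_inj hu12 hw12 (y, Sum.inl a) (z, Sum.inl a) hy hz hyz rfl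
        exact (Prod.ext_iff.1 this).1
      have hout_inj : Set.InjOn (modifiedProj v)
          {y | modifiedRel E v u1 u2 w1 w2 (Sum.inl a) y} := by
        intro y hy z hz hyz
        have := proj_inj hu12 hw12 (Sum.inl a, y) (Sum.inl a, z) hy hz rfl hyz
        exact (Prod.ext_iff.1 this).2
      have e1 : indeg (modifiedRel E v u1 u2 w1 w2) (Sum.inl a) = indeg E a.1 := by
        rw [indeg, indeg, ← hin_img, Set.ncard_image_of_injOn hin_inj]
      have e2 : outdeg (modifiedRel E v u1 u2 w1 w2) (Sum.inl a) = outdeg E a.1 := by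
        rw [outdeg, outdeg, ← hout_img, Set.ncard_image_of_injOn hout_inj]
      rw [e1, e2]
      exact eulerian_balanced E c hc a.1
    · -- new nodes
      cases b
      · have h1 : {y | modifiedRel E v u1 u2 w1 w2 y (Sum.inr false)}
            = {Sum.inl ⟨u1, hu1v⟩} := by
          ext y
          constructor
          · intro h
            rcases y with a | a
            · exact congrArg _ (Subtype.ext h)
            · cases a <;> exact h.elim
          · intro h
            rw [Set.mem_singleton_iff] at h
            subst h
            exact rfl
        have h2 : {y | modifiedRel E v u1 u2 w1 w2 (Sum.inr false) y}
            = {Sum.inl ⟨w2, hw2v⟩} := by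
          ext y
          constructor
          · intro h
            rcases y with a | a
            · exact congrArg _ (Subtype.ext h)
            · exact h.elim
          · intro h
            rw [Set.mem_singleton_iff] at h
            subst h
            exact rfl
        rw [indeg, outdeg, h1, h2, Set.ncard_singleton, Set.ncard_singleton]
      · have h1 : {y | modifiedRel E v u1 u2 w1 w2 y (Sum.inr true)}
            = {Sum.inl ⟨u2, hu2v⟩} := by
          ext y
          constructor
          · intro h
            rcases y with a | a
            · exact congrArg _ (Subtype.ext h)
            · cases a <;> exact h.elim
          · intro h
            rw [Set.mem_singleton_iff] at h
            subst h
            exact rfl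
        have h2 : {y | modifiedRel E v u1 u2 w1 w2 (Sum.inr true) y}
            = {Sum.inl ⟨w1, hw1v⟩} := by
          ext y
          constructor
          · intro h
            rcases y with a | a
            · exact congrArg _ (Subtype.ext h)
            · exact h.elim
          · intro h
            rw [Set.mem_singleton_iff] at h
            subst h
            exact rfl
        rw [indeg, outdeg, h1, h2, Set.ncard_singleton, Set.ncard_singleton]
  · -- connectivity
    have hdel : ((underlyingUG E).induce {u : V | u ≠ v}).Connected := not_not.mp hnotcut
    let F : (underlyingUG E).induce {u : V | u ≠ v} →g
        underlyingUG (modifiedRel E v u1 u2 w1 w2) :=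
      { toFun := fun a => Sum.inl ⟨a.1, a.2⟩
        map_rel' := by
          intro a b hab
          obtain ⟨hne, hor⟩ : _ ∧ _ := hab
          exact And.intro (fun h => hne (congrArg (modifiedProj v) h)) hor }
    have hreach : ∀ y, (underlyingUG (modifiedRel E v u1 u2 w1 w2)).Reachable y
        (Sum.inl ⟨w2, hw2v⟩) := by
      intro y
      rcases y with a | b
      · exact (hdel.preconnected ⟨a.1, a.2⟩ ⟨w2, hw2v⟩).map F
      · cases b
        · exact SimpleGraph.Adj.reachable (And.intro (by simp) (Or.inl rfl))
        · have hadj : (underlyingUG (modifiedRel E v u1 u2 w1 w2)).Adj (Sum.inr true)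
              (Sum.inl ⟨w1, hw1v⟩) := And.intro (by simp) (Or.inl rfl)
          exact hadj.reachable.trans ((hdel.preconnected ⟨w1, hw1v⟩ ⟨w2, hw2v⟩).map F)
    have : Nonempty ({x : V // x ≠ v} ⊕ Bool) := ⟨Sum.inr false⟩
    exact SimpleGraph.Connected.mk (fun x y => (hreach x).trans (hreach y).symm)
  · -- circuits project
    intro c' hc'
    obtain ⟨hne, hnd, hmem⟩ := hc'
    have hmap : cyclicPairs (c'.map (modifiedProj v)) =
        (cyclicPairs c').map (Prod.map (modifiedProj v) (modifiedProj v)) := by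
      unfold cyclicPairs
      rw [← List.map_rotate, List.zip_map]
    refine ⟨by simpa using hne, ?_, ?_⟩
    · rw [hmap]
      refine List.Nodup.map_on ?_ hnd
      intro p hp q hq hpq
      exact proj_inj hu12 hw12 p q ((hmem p).1 hp) ((hmem q).1 hq)
        (congrArg Prod.fst hpq) (congrArg Prod.snd hpq)
    · intro p
      rw [hmap]
      constructor
      · intro hp
        obtain ⟨q, hq, rfl⟩ := List.mem_map.1 hp
        exact proj_edge hEu1 hEu2 hEw1 hEw2 ((hmem q).1 hq)
      · intro hE
        rw [List.mem_map]
        by_cases h1 : p.1 = v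
        · rcases (houtv p.2).1 (h1 ▸ hE) with h | h
          · exact ⟨(Sum.inr true, Sum.inl ⟨w1, hw1v⟩), (hmem _).2 rfl, Prod.ext h1.symm h.symm⟩
          · exact ⟨(Sum.inr false, Sum.inl ⟨w2, hw2v⟩), (hmem _).2 rfl, Prod.ext h1.symm h.symm⟩
        · by_cases h2 : p.2 = v
          · rcases (hinv p.1).1 (h2 ▸ hE) with h | h
            · exact ⟨(Sum.inl ⟨p.1, h1⟩, Sum.inr false), (hmem _).2 h, Prod.ext rfl h2.symm⟩
            · exact ⟨(Sum.inl ⟨p.1, h1⟩, Sum.inr true), (hmem _).2 h, Prod.ext rfl h2.symm⟩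
          · exact ⟨(Sum.inl ⟨p.1, h1⟩, Sum.inl ⟨p.2, h2⟩), (hmem _).2 hE, Prod.ext rfl rfl⟩
end

section
/- Let C be an Eulerian circuit of a directed Eulerian graph G, and let v be a node occurring (at least) three times in C, at positions giving subwalks C = ... v_0 C_0 v C_1 v_1 ..., where C_0 is the subwalk from an occurrence v_0 of v to the next occurrence, and C_1 from that occurrence to the following occurrence v_1. Then the circuit C* obtained from C by swapping the subwalks C_0 and C_1 is also an Eulerian circuit of G. -/
def pairs {V : Type*} (l : List V) : List (V × V) := l.zip l.tail

lemma pairs_cons_cons {V : Type*} (a b : V) (l : List V) :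
    pairs (a :: b :: l) = (a, b) :: pairs (b :: l) := rfl

lemma pairs_split {V : Type*} (y : V) (Z : List V) :
    ∀ X : List V, pairs (X ++ y :: Z) = pairs (X ++ [y]) ++ pairs (y :: Z)
  | [] => by simp [pairs]
  | [x] => by simp [pairs_cons_cons, pairs]
  | x :: x' :: X => by
      have ih := pairs_split y Z (x' :: X)
      simp only [List.cons_append] at ih ⊢
      rw [pairs_cons_cons, ih]
      rfl

lemma pairs_split' {V : Type*} (x y : V) (X Z : List V) :
    pairs (x :: (X ++ y :: Z)) = pairs (x :: X ++ [y]) ++ pairs (y :: Z) := by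
  rw [← List.cons_append, pairs_split]

lemma zip_rot {V : Type*} (c : V) : ∀ (l : List V) (a : V),
    (a :: l).zip (l ++ [c]) = pairs ((a :: l) ++ [c])
  | [], a => rfl
  | b :: l, a => by
      rw [show ((a :: b :: l).zip ((b :: l) ++ [c])) = (a, b) :: (b :: l).zip (l ++ [c]) from rfl,
        zip_rot c l b]
      rfl

lemma cyclicPairs_eq {V : Type*} (a : V) (l : List V) :
    cyclicPairs (a :: l) = pairs ((a :: l) ++ [a]) := by
  rw [cyclicPairs, List.rotate_cons_succ, List.rotate_zero, zip_rot]

lemma perm_core {V : Type*} (v : V) (B D T : List V) :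
    (pairs (v :: (B ++ v :: (D ++ v :: T)))).Perm
      (pairs (v :: (D ++ v :: (B ++ v :: T)))) := by
  rw [pairs_split' v v B, pairs_split' v v D, pairs_split' v v D, pairs_split' v v B]
  have h := (List.perm_append_comm (l₁ := pairs (v :: B ++ [v]))
    (l₂ := pairs (v :: D ++ [v]))).append_right (pairs (v :: T))
  simpa [List.append_assoc] using h

lemma cp_perm {V : Type*} (v : V) (A B D F : List V) :
    (cyclicPairs (A ++ [v] ++ B ++ [v] ++ D ++ [v] ++ F)).Perm
      (cyclicPairs (A ++ [v] ++ D ++ [v] ++ B ++ [v] ++ F)) := by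
  cases A with
  | nil =>
      have e1 : ([] : List V) ++ [v] ++ B ++ [v] ++ D ++ [v] ++ F
          = v :: (B ++ v :: (D ++ v :: F)) := by simp
      have e2 : ([] : List V) ++ [v] ++ D ++ [v] ++ B ++ [v] ++ F
          = v :: (D ++ v :: (B ++ v :: F)) := by simp
      rw [e1, e2, cyclicPairs_eq, cyclicPairs_eq]
      have e3 : (v :: (B ++ v :: (D ++ v :: F))) ++ [v]
          = v :: (B ++ v :: (D ++ v :: (F ++ [v]))) := by simp
      have e4 : (v :: (D ++ v :: (B ++ v :: F))) ++ [v]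
          = v :: (D ++ v :: (B ++ v :: (F ++ [v]))) := by simp
      rw [e3, e4]
      exact perm_core v B D (F ++ [v])
  | cons a A =>
      have e1 : (a :: A) ++ [v] ++ B ++ [v] ++ D ++ [v] ++ F
          = a :: (A ++ v :: (B ++ v :: (D ++ v :: F))) := by simp
      have e2 : (a :: A) ++ [v] ++ D ++ [v] ++ B ++ [v] ++ F
          = a :: (A ++ v :: (D ++ v :: (B ++ v :: F))) := by simp
      rw [e1, e2, cyclicPairs_eq, cyclicPairs_eq]
      have e3 : (a :: (A ++ v :: (B ++ v :: (D ++ v :: F)))) ++ [a]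
          = a :: (A ++ v :: (B ++ v :: (D ++ v :: (F ++ [a])))) := by simp
      have e4 : (a :: (A ++ v :: (D ++ v :: (B ++ v :: F)))) ++ [a]
          = a :: (A ++ v :: (D ++ v :: (B ++ v :: (F ++ [a])))) := by simp
      rw [e3, e4, pairs_split' a v A, pairs_split' a v A]
      exact (perm_core v B D (F ++ [a])).append_left _

/-- Swapping two consecutive `v`-to-`v` segments of an Eulerian circuit yields an
Eulerian circuit: if `A ++ [v] ++ B ++ [v] ++ D ++ [v] ++ F` is Eulerian then so is
`A ++ [v] ++ D ++ [v] ++ B ++ [v] ++ F`. -/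
theorem swap_segments_eulerian {V : Type*} [Fintype V] (E : V → V → Prop)
    (hconn : (underlyingUG E).Connected)
    (v : V) (A B D F : List V)
    (hc : IsEulerianCircuit E (A ++ [v] ++ B ++ [v] ++ D ++ [v] ++ F)) :
    IsEulerianCircuit E (A ++ [v] ++ D ++ [v] ++ B ++ [v] ++ F) := by
  obtain ⟨hne, hnd, hmem⟩ := hc
  have hp := cp_perm v A B D F
  refine ⟨by simp, hp.nodup hnd, fun p => by rw [← hp.mem_iff]; exact hmem p⟩
end
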